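/- Let X be an almost transitive Banach space whose norm is equivalent to a norm induced by an inner product (an almost transitive renorming of a Hilbert space). Then every point of the unit sphere of X admits both an inner ellipsoid and an outer ellipsoid. -/
import Mathlib
open Filter Topology


/-- A function `n` is a norm coming from an inner product iff it is a norm
satisfying the parallelogram law. -/
def IsEuclideanNorm {X : Type*} [AddCommGroup X] [Module ℝ X] (n : X → ℝ) : Prop :=
  (∀ z : X, 0 ≤ n z) ∧ (∀ z : X, n z = 0 ↔ z = 0) ∧
  (∀ (c : ℝ) (z : X), n (c • z) = |c| * n z) ∧
  (∀ u v : X, n (u + v) ≤ n u + n v) ∧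
  (∀ u v : X, n (u + v) ^ 2 + n (u - v) ^ 2 = 2 * n u ^ 2 + 2 * n v ^ 2)

/-- The norm of `X` is equivalent to a norm induced by an inner product. -/
def IsHilbertRenorming (X : Type*) [NormedAddCommGroup X] [Module ℝ X] : Prop :=
  ∃ n : X → ℝ, IsEuclideanNorm n ∧
    ∃ a > (0 : ℝ), ∃ b > (0 : ℝ), ∀ z : X, a * ‖z‖ ≤ n z ∧ n z ≤ b * ‖z‖

/-- The point `x` of the unit sphere admits an inner ellipsoid: an equivalent
inner-product norm `n` with `‖z‖ ≤ n z` everywhere and `n x = 1`. -/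
def InnerEllipsoidAt {X : Type*} [NormedAddCommGroup X] [Module ℝ X] (x : X) : Prop :=
  ∃ n : X → ℝ, IsEuclideanNorm n ∧ (∃ b > (0 : ℝ), ∀ z : X, n z ≤ b * ‖z‖) ∧
    (∀ z : X, ‖z‖ ≤ n z) ∧ n x = 1

/-- The point `x` of the unit sphere admits an outer ellipsoid: an equivalent
inner-product norm `n` with `n z ≤ ‖z‖` everywhere and `n x = 1`. -/
def OuterEllipsoidAt {X : Type*} [NormedAddCommGroup X] [Module ℝ X] (x : X) : Prop :=
  ∃ n : X → ℝ, IsEuclideanNorm n ∧ (∃ a > (0 : ℝ), ∀ z : X, a * ‖z‖ ≤ n z) ∧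
    (∀ z : X, n z ≤ ‖z‖) ∧ n x = 1

lemma exists_ultralim (U : Ultrafilter ℕ) (f : ℕ → ℝ) (B : ℝ)
    (h : ∀ k, f k ∈ Set.Icc (-B) B) :
    ∃ L, Filter.Tendsto f ↑U (𝓝 L) := by
  obtain ⟨L, _, hle⟩ := isCompact_Icc.ultrafilter_le_nhds (U.map f)
    (by rw [Filter.le_principal_iff]; exact Filter.mem_map.2 (Filter.univ_mem' h))
  exact ⟨L, by rwa [Filter.Tendsto, ← Ultrafilter.coe_map]⟩

lemma IsEuclideanNorm.const_mul {X : Type*} [AddCommGroup X] [Module ℝ X] {n : X → ℝ}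
    (hn : IsEuclideanNorm n) {c : ℝ} (hc : 0 < c) : IsEuclideanNorm (fun z => c * n z) := by
  obtain ⟨h1, h2, h3, h4, h5⟩ := hn
  refine ⟨fun z => mul_nonneg hc.le (h1 z), fun z => ?_,
    fun a z => by dsimp only; rw [h3]; ring, fun u v => ?_, fun u v => ?_⟩
  · dsimp only; rw [mul_eq_zero, ← h2 z]; simp [hc.ne']
  · dsimp only; have := h4 u v; nlinarith
  · dsimp only; have := h5 u v; linear_combination c^2 * this

lemma IsEuclideanNorm.comp {X : Type*} [NormedAddCommGroup X] [Module ℝ X] {n : X → ℝ}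
    (hn : IsEuclideanNorm n) (T : X →L[ℝ] X) (hT : Function.Injective T) :
    IsEuclideanNorm (fun z => n (T z)) := by
  obtain ⟨h1, h2, h3, h4, h5⟩ := hn
  refine ⟨fun z => h1 _, fun z => ?_, fun a z => by dsimp only; rw [map_smul, h3],
    fun u v => by dsimp only; rw [map_add]; exact h4 _ _,
    fun u v => by dsimp only; rw [map_add, map_sub]; exact h5 _ _⟩
  dsimp only; rw [h2]
  constructor
  · intro h; exact hT (by simpa using h)
  · rintro rfl; simp

lemma sphere_bound_low {X : Type*} [NormedAddCommGroup X] [NormedSpace ℝ X] {n : X → ℝ}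
    (hn : IsEuclideanNorm n) {c : ℝ} (h : ∀ z : X, ‖z‖ = 1 → c ≤ n z) :
    ∀ z, c * ‖z‖ ≤ n z := by
  intro z
  rcases eq_or_ne z 0 with rfl | hz
  · simp [(hn.2.1 (0:X)).2 rfl]
  · have hnz : ‖z‖ ≠ 0 := norm_ne_zero_iff.2 hz
    have h1 : ‖(‖z‖⁻¹ • z)‖ = 1 := by
      rw [norm_smul, norm_inv, norm_norm, inv_mul_cancel₀ hnz]
    have h2 : n z = ‖z‖ * n (‖z‖⁻¹ • z) := by
      have := hn.2.2.1 ‖z‖ (‖z‖⁻¹ • z)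
      rw [smul_smul, mul_inv_cancel₀ hnz, one_smul, abs_of_nonneg (norm_nonneg z)] at this
      rw [this]
    rw [h2, mul_comm c]
    exact mul_le_mul_of_nonneg_left (h _ h1) (norm_nonneg z)

lemma sphere_bound_high {X : Type*} [NormedAddCommGroup X] [NormedSpace ℝ X] {n : X → ℝ}
    (hn : IsEuclideanNorm n) {d : ℝ} (h : ∀ z : X, ‖z‖ = 1 → n z ≤ d) :
    ∀ z, n z ≤ d * ‖z‖ := by
  intro z
  rcases eq_or_ne z 0 with rfl | hz
  · simp [(hn.2.1 (0:X)).2 rfl]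
  · have hnz : ‖z‖ ≠ 0 := norm_ne_zero_iff.2 hz
    have h1 : ‖(‖z‖⁻¹ • z)‖ = 1 := by
      rw [norm_smul, norm_inv, norm_norm, inv_mul_cancel₀ hnz]
    have h2 : n z = ‖z‖ * n (‖z‖⁻¹ • z) := by
      have := hn.2.2.1 ‖z‖ (‖z‖⁻¹ • z)
      rw [smul_smul, mul_inv_cancel₀ hnz, one_smul, abs_of_nonneg (norm_nonneg z)] at this
      rw [this]
    rw [h2, mul_comm d]
    exact mul_le_mul_of_nonneg_left (h _ h1) (norm_nonneg z)

lemma aux_limit {X : Type*} [NormedAddCommGroup X] [Module ℝ X]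
    (U : Ultrafilter ℕ)
    (N : ℕ → X → ℝ) (hN : ∀ k, IsEuclideanNorm (N k))
    (lo hi : ℝ) (hlo : 0 < lo)
    (hN_lo : ∀ k z, lo * ‖z‖ ≤ N k z) (hN_hi : ∀ k z, N k z ≤ hi * ‖z‖)
    (x : X) (r : ℝ)
    (hlim : Filter.Tendsto (fun k => N k x) ↑U (𝓝 r)) :
    ∃ m : X → ℝ, IsEuclideanNorm m ∧ (∀ z, lo * ‖z‖ ≤ m z) ∧ (∀ z, m z ≤ hi * ‖z‖) ∧
      m x = r := by
  have hbd : ∀ z, ∀ k, N k z ∈ Set.Icc (-(hi * ‖z‖)) (hi * ‖z‖) := by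
    intro z k
    have h0 : 0 ≤ N k z := (hN k).1 z
    exact ⟨le_trans (neg_nonpos_of_nonneg (h0.trans (hN_hi k z))) h0, hN_hi k z⟩
  choose m hm using fun z => exists_ultralim U (fun k => N k z) (hi * ‖z‖) (hbd z)
  have hlow : ∀ z, lo * ‖z‖ ≤ m z := fun z =>
    le_of_tendsto_of_tendsto' tendsto_const_nhds (hm z) (fun k => hN_lo k z)
  have hhigh : ∀ z, m z ≤ hi * ‖z‖ := fun z =>
    le_of_tendsto_of_tendsto' (hm z) tendsto_const_nhds (fun k => hN_hi k z)
  have hnonneg : ∀ z, 0 ≤ m z := fun z =>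
    le_of_tendsto_of_tendsto' tendsto_const_nhds (hm z) (fun k => (hN k).1 z)
  refine ⟨m, ⟨hnonneg, fun z => ?_, fun c z => ?_, fun u v => ?_, fun u v => ?_⟩,
    hlow, hhigh, tendsto_nhds_unique (hm x) hlim⟩
  · constructor
    · intro h
      have := hlow z
      rw [h] at this
      have : ‖z‖ = 0 := by nlinarith [norm_nonneg z]
      exact norm_eq_zero.1 this
    · rintro rfl
      have h0 : ∀ k, N k (0 : X) = 0 := fun k => ((hN k).2.1 0).2 rfl
      exact tendsto_nhds_unique (hm 0) (by simpa [h0] using (tendsto_const_nhds :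
        Filter.Tendsto (fun _ : ℕ => (0:ℝ)) ↑U (𝓝 0)))
  · refine tendsto_nhds_unique (hm (c • z)) ?_
    have : Filter.Tendsto (fun k => |c| * N k z) ↑U (𝓝 (|c| * m z)) := (hm z).const_mul _
    exact this.congr fun k => ((hN k).2.2.1 c z).symm
  · refine le_of_tendsto_of_tendsto' (hm (u + v)) ((hm u).add (hm v))
      (fun k => (hN k).2.2.2.1 u v)
  · refine tendsto_nhds_unique (((hm (u+v)).pow 2).add ((hm (u-v)).pow 2)) ?_
    have : Filter.Tendsto (fun k => 2 * N k u ^ 2 + 2 * N k v ^ 2) ↑U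
        (𝓝 (2 * m u ^ 2 + 2 * m v ^ 2)) :=
      (((hm u).pow 2).const_mul 2).add (((hm v).pow 2).const_mul 2)
    exact this.congr fun k => ((hN k).2.2.2.2 u v).symm

/-- every point of the unit sphere of an almost transitive renorming of a
Hilbert space admits both an inner ellipsoid and an outer ellipsoid. -/
theorem AT_renorming_ellipsoids_everywhere
    {X : Type*} [NormedAddCommGroup X] [NormedSpace ℝ X] [CompleteSpace X]
    (hren : IsHilbertRenorming X)
    (hAT : ∀ x y : X, ‖x‖ = 1 → ‖y‖ = 1 → ∀ ε > (0 : ℝ),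
      ∃ T : X →L[ℝ] X, Function.Surjective T ∧ (∀ z : X, ‖T z‖ = ‖z‖) ∧ ‖y - T x‖ ≤ ε) :
    ∀ x : X, ‖x‖ = 1 → InnerEllipsoidAt x ∧ OuterEllipsoidAt x := by
  intro x hx
  obtain ⟨n, hn, a, ha, b, hb, hbd⟩ := hren
  obtain ⟨U, hUle⟩ := Filter.exists_ultrafilter_le (Filter.atTop : Filter ℕ)
  have hnlo : ∀ z : X, a * ‖z‖ ≤ n z := fun z => (hbd z).1
  have hnhi : ∀ z : X, n z ≤ b * ‖z‖ := fun z => (hbd z).2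
  set S : Set ℝ := (fun z => n z) '' {z : X | ‖z‖ = 1} with hS
  have hSne : S.Nonempty := ⟨n x, x, hx, rfl⟩
  have hSbddB : BddBelow S := ⟨a, by rintro t ⟨z, hz, rfl⟩; simpa [show ‖z‖ = 1 from hz] using hnlo z⟩
  have hSbddA : BddAbove S := ⟨b, by rintro t ⟨z, hz, rfl⟩; simpa [show ‖z‖ = 1 from hz] using hnhi z⟩
  have h0 : Filter.Tendsto (fun k : ℕ => 1/((k:ℝ)+1)) Filter.atTop (𝓝 0) :=
    tendsto_one_div_add_atTop_nhds_zero_nat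
  constructor
  · -- INNER
    set c := sInf S with hc
    have hca : a ≤ c := le_csInf hSne (by rintro t ⟨z, hz, rfl⟩; simpa [show ‖z‖ = 1 from hz] using hnlo z)
    have hcpos : 0 < c := lt_of_lt_of_le ha hca
    have hcb : ∀ z : X, ‖z‖ = 1 → c ≤ n z := fun z hz => csInf_le hSbddB ⟨z, hz, rfl⟩
    have hclow : ∀ z, c * ‖z‖ ≤ n z := sphere_bound_low hn hcb
    have happrox : ∀ k : ℕ, ∃ y : X, ‖y‖ = 1 ∧ n y < c + 1/((k:ℝ)+1) := by
      intro k
      have hε : (0:ℝ) < 1/((k:ℝ)+1) := by positivity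
      obtain ⟨t, ⟨z, hz, rfl⟩, hlt⟩ := exists_lt_of_csInf_lt hSne
        (lt_add_of_pos_right c hε)
      exact ⟨z, hz, hlt⟩
    choose y hy1 hy2 using happrox
    have hTex : ∀ k : ℕ, ∃ T : X →L[ℝ] X, Function.Surjective T ∧ (∀ z, ‖T z‖ = ‖z‖) ∧
        ‖y k - T x‖ ≤ 1/((k:ℝ)+1) := fun k => hAT x (y k) hx (hy1 k) _ (by positivity)
    choose T _ hTiso hTclose using hTex
    set N : ℕ → X → ℝ := fun k z => n (T k z) with hNdef
    have hNeuc : ∀ k, IsEuclideanNorm (N k) := fun k =>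
      hn.comp (T k) (fun u v h => by
        have h2 := hTiso k (u - v)
        rw [map_sub, h, sub_self, norm_zero] at h2
        exact sub_eq_zero.1 (norm_eq_zero.1 h2.symm))
    have hNlo : ∀ k z, c * ‖z‖ ≤ N k z := fun k z => by
      have := hclow (T k z); rwa [hTiso k z] at this
    have hNhi : ∀ k z, N k z ≤ b * ‖z‖ := fun k z => by
      have := hnhi (T k z); rwa [hTiso k z] at this
    have hlimA : Filter.Tendsto (fun k => N k x) Filter.atTop (𝓝 c) := by
      refine tendsto_of_tendsto_of_tendsto_of_le_of_le (g := fun _ : ℕ => c)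
        (h := fun k : ℕ => c + (1+b) * (1/((k:ℝ)+1))) tendsto_const_nhds
        (by simpa using tendsto_const_nhds.add (h0.const_mul (1+b))) ?_ ?_
      · intro k
        exact hcb (T k x) (by rw [hTiso k x, hx])
      · intro k
        have e1 : N k x ≤ n (y k) + n (T k x - y k) := by
          have := hn.2.2.2.1 (y k) (T k x - y k)
          rwa [show y k + (T k x - y k) = T k x by abel] at this
        have e2 : n (T k x - y k) ≤ b * ‖y k - T k x‖ := by
          have := hnhi (T k x - y k); rwa [norm_sub_rev] at this
        have e4 : b * ‖y k - T k x‖ ≤ b * (1/((k:ℝ)+1)) :=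
          mul_le_mul_of_nonneg_left (hTclose k) hb.le
        have e5 : (1+b) * (1/((k:ℝ)+1)) = 1/((k:ℝ)+1) + b * (1/((k:ℝ)+1)) := by ring
        have := hy2 k
        dsimp only [N]
        rw [e5]
        dsimp only [N] at e1
        linarith
    have hlimU := hlimA.mono_left hUle
    obtain ⟨m, hmeuc, hmlo, hmhi, hmx⟩ := aux_limit U N hNeuc c b hcpos hNlo hNhi x c hlimU
    have inner : InnerEllipsoidAt x := by
      refine ⟨fun z => c⁻¹ * m z, hmeuc.const_mul (inv_pos.2 hcpos),
        ⟨c⁻¹ * b, by positivity, fun z => ?_⟩, fun z => ?_,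
        by dsimp only; rw [hmx, inv_mul_cancel₀ hcpos.ne']⟩
      · dsimp only; rw [mul_assoc]
        exact mul_le_mul_of_nonneg_left (hmhi z) (by positivity)
      · dsimp only
        have := mul_le_mul_of_nonneg_left (hmlo z) (inv_nonneg.2 hcpos.le)
        rwa [← mul_assoc, inv_mul_cancel₀ hcpos.ne', one_mul] at this
    exact inner
  · -- OUTER
    set d := sSup S with hd
    have hdb : ∀ z : X, ‖z‖ = 1 → n z ≤ d := fun z hz => le_csSup hSbddA ⟨z, hz, rfl⟩
    have hdpos : 0 < d := by
      have h1 := hnlo x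
      have h2 := hdb x hx
      rw [hx, mul_one] at h1
      linarith
    have hdhigh : ∀ z, n z ≤ d * ‖z‖ := sphere_bound_high hn hdb
    have happrox : ∀ k : ℕ, ∃ y : X, ‖y‖ = 1 ∧ d - 1/((k:ℝ)+1) < n y := by
      intro k
      have hε : (0:ℝ) < 1/((k:ℝ)+1) := by positivity
      obtain ⟨t, ⟨z, hz, rfl⟩, hlt⟩ := exists_lt_of_lt_csSup hSne
        (by linarith : d - 1/((k:ℝ)+1) < d)
      exact ⟨z, hz, hlt⟩
    choose y hy1 hy2 using happrox
    have hTex : ∀ k : ℕ, ∃ T : X →L[ℝ] X, Function.Surjective T ∧ (∀ z, ‖T z‖ = ‖z‖) ∧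
        ‖y k - T x‖ ≤ 1/((k:ℝ)+1) := fun k => hAT x (y k) hx (hy1 k) _ (by positivity)
    choose T _ hTiso hTclose using hTex
    set N : ℕ → X → ℝ := fun k z => n (T k z) with hNdef
    have hNeuc : ∀ k, IsEuclideanNorm (N k) := fun k =>
      hn.comp (T k) (fun u v h => by
        have h2 := hTiso k (u - v)
        rw [map_sub, h, sub_self, norm_zero] at h2
        exact sub_eq_zero.1 (norm_eq_zero.1 h2.symm))
    have hNlo : ∀ k z, a * ‖z‖ ≤ N k z := fun k z => by
      have := hnlo (T k z); rwa [hTiso k z] at this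
    have hNhi : ∀ k z, N k z ≤ d * ‖z‖ := fun k z => by
      have := hdhigh (T k z); rwa [hTiso k z] at this
    have hlimA : Filter.Tendsto (fun k => N k x) Filter.atTop (𝓝 d) := by
      refine tendsto_of_tendsto_of_tendsto_of_le_of_le
        (g := fun k : ℕ => d - (1+b) * (1/((k:ℝ)+1))) (h := fun _ : ℕ => d)
        (by simpa using tendsto_const_nhds.sub (h0.const_mul (1+b))) tendsto_const_nhds ?_ ?_
      · intro k
        have e1 : n (y k) ≤ N k x + n (y k - T k x) := by
          have := hn.2.2.2.1 (T k x) (y k - T k x)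
          rwa [show T k x + (y k - T k x) = y k by abel] at this
        have e2 : n (y k - T k x) ≤ b * ‖y k - T k x‖ := hnhi _
        have e4 : b * ‖y k - T k x‖ ≤ b * (1/((k:ℝ)+1)) :=
          mul_le_mul_of_nonneg_left (hTclose k) hb.le
        have e5 : (1+b) * (1/((k:ℝ)+1)) = 1/((k:ℝ)+1) + b * (1/((k:ℝ)+1)) := by ring
        have := hy2 k
        dsimp only [N] at e1 ⊢
        rw [e5]
        linarith
      · intro k
        exact hdb (T k x) (by rw [hTiso k x, hx])
    have hlimU := hlimA.mono_left hUle
    obtain ⟨m, hmeuc, hmlo, hmhi, hmx⟩ := aux_limit U N hNeuc a d ha hNlo hNhi x d hlimU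
    refine ⟨fun z => d⁻¹ * m z, hmeuc.const_mul (inv_pos.2 hdpos),
      ⟨d⁻¹ * a, by positivity, fun z => ?_⟩, fun z => ?_,
      by dsimp only; rw [hmx, inv_mul_cancel₀ hdpos.ne']⟩
    · dsimp only; rw [mul_assoc]
      exact mul_le_mul_of_nonneg_left (hmlo z) (by positivity)
    · dsimp only
      have := mul_le_mul_of_nonneg_left (hmhi z) (inv_nonneg.2 hdpos.le)
      rwa [← mul_assoc, inv_mul_cancel₀ hdpos.ne', one_mul] at this
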